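/- Let x, y be m-dimensional probability vectors with x ∈ S°(y), and x', y' be n-dimensional probability vectors with x' ∈ S°(y'). Then for any positive integers k, p, q: x^{⊗k} is an interior point of S(y^{⊗k}), and x^{⊗p} ⊗ x'^{⊗q} is an interior point of S(y^{⊗p} ⊗ y'^{⊗q}). -/

import Mathlib

open Finset

variable {ι κ : Type*}

/-- `eSum x l` is the sum of the `l` largest components of `x`. -/
noncomputable def eSum [Fintype ι] (x : ι → ℝ) (l : ℕ) : ℝ :=
  sSup {r : ℝ | ∃ s : Finset ι, s.card = l ∧ r = ∑ i ∈ s, x i}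

/-- Majorization `x ≺ y` for vectors over the same (finite) index type:
`e_l(x) ≤ e_l(y)` for all `1 ≤ l ≤ n - 1`, with equal total sums. -/
def Maj [Fintype ι] (x y : ι → ℝ) : Prop :=
  (∀ l : ℕ, 1 ≤ l → l < Fintype.card ι → eSum x l ≤ eSum y l) ∧
    ∑ i, x i = ∑ i, y i

/-- A probability vector: nonnegative components summing to 1. -/
def IsProbVec [Fintype ι] (x : ι → ℝ) : Prop :=
  (∀ i, 0 ≤ x i) ∧ ∑ i, x i = 1

/-- Kronecker product of two vectors. -/
def kron (x : ι → ℝ) (c : κ → ℝ) : ι × κ → ℝ := fun p => x p.1 * c p.2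

/-- `k`-fold Kronecker power of a vector. -/
def kpow (x : ι → ℝ) (k : ℕ) : (Fin k → ι) → ℝ := fun f => ∏ j, x (f j)

/-- Direct sum (concatenation) of two vectors. -/
def dsum (x : ι → ℝ) (c : κ → ℝ) : ι ⊕ κ → ℝ := Sum.elim x c

/-- `k`-fold direct sum (concatenation) of `x` with itself. -/
def dpow (x : ι → ℝ) (k : ℕ) : Fin k × ι → ℝ := fun p => x p.2

/-- `x ∈ S°(y)`: all partial-sum inequalities `e_l(x) < e_l(y)` are strict for
`1 ≤ l ≤ n - 1`, and the total sums coincide. -/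
def InteriorS [Fintype ι] (x y : ι → ℝ) : Prop :=
  (∀ l : ℕ, 1 ≤ l → l < Fintype.card ι → eSum x l < eSum y l) ∧
    ∑ i, x i = ∑ i, y i

/-- `d_x`: the number of nonzero components of `x`. -/
noncomputable def dsupp (x : ι → ℝ) : ℕ := Nat.card (Function.support x)

/-- The `α`-Renyi entropy `S^{(α)}(x)`; at `α = 1` it is the Shannon entropy. -/
noncomputable def renyi [Fintype ι] (x : ι → ℝ) (α : ℝ) : ℝ :=
  if α = 1 then -∑ i, x i * Real.logb 2 (x i)
  else (if 0 ≤ α then (1 : ℝ) else -1) / (1 - α) *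
    Real.logb 2 (∑ i, if x i = 0 then 0 else x i ^ α)

/-- The Renyi entropy of `x` is not less than that of `y`. -/
def RenyiGE [Fintype ι] [Fintype κ] (x : ι → ℝ) (y : κ → ℝ) : Prop :=
  (dsupp x > dsupp y ∧ ∀ α : ℝ, 0 ≤ α → renyi y α ≤ renyi x α) ∨
  (dsupp x = dsupp y ∧ ∀ α : ℝ, renyi y α ≤ renyi x α)

section aux
variable [Fintype ι] [Fintype κ]

lemma eSum_setFinite (x : ι → ℝ) (l : ℕ) :
    {r : ℝ | ∃ s : Finset ι, s.card = l ∧ r = ∑ i ∈ s, x i}.Finite := by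
  have : {r : ℝ | ∃ s : Finset ι, s.card = l ∧ r = ∑ i ∈ s, x i}
      = (fun s : Finset ι => ∑ i ∈ s, x i) '' {s | s.card = l} := by
    ext r
    constructor
    · rintro ⟨s, hs, rfl⟩
      exact Set.mem_image_of_mem _ hs
    · rintro ⟨s, hs, rfl⟩
      exact ⟨s, hs, rfl⟩
  rw [this]
  exact (Set.toFinite _).image _

lemma sum_le_eSum (x : ι → ℝ) {l : ℕ} {s : Finset ι} (hs : s.card = l) :
    ∑ i ∈ s, x i ≤ eSum x l := by
  apply le_csSup (Set.Finite.bddAbove (eSum_setFinite x l))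
  exact ⟨s, hs, rfl⟩

lemma exists_eSum_eq (x : ι → ℝ) {l : ℕ} (hl : l ≤ Fintype.card ι) :
    ∃ s : Finset ι, s.card = l ∧ eSum x l = ∑ i ∈ s, x i := by
  have hne : {r : ℝ | ∃ s : Finset ι, s.card = l ∧ r = ∑ i ∈ s, x i}.Nonempty := by
    obtain ⟨t, -, ht⟩ := Finset.exists_subset_card_eq
      (show l ≤ (univ : Finset ι).card by simpa using hl)
    exact ⟨_, t, ht, rfl⟩
  obtain ⟨s, hs, hr⟩ := hne.csSup_mem (eSum_setFinite x l)
  exact ⟨s, hs, hr⟩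

lemma eSum_zero (x : ι → ℝ) : eSum x 0 = 0 := by
  have : {r : ℝ | ∃ s : Finset ι, s.card = 0 ∧ r = ∑ i ∈ s, x i} = {0} := by
    ext r
    simp only [Set.mem_setOf_eq, Set.mem_singleton_iff, Finset.card_eq_zero]
    constructor
    · rintro ⟨s, rfl, rfl⟩; simp
    · rintro rfl; exact ⟨∅, rfl, by simp⟩
  rw [eSum, this, csSup_singleton]

lemma eSum_card (x : ι → ℝ) : eSum x (Fintype.card ι) = ∑ i, x i := by
  have : {r : ℝ | ∃ s : Finset ι, s.card = Fintype.card ι ∧ r = ∑ i ∈ s, x i}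
      = {∑ i, x i} := by
    ext r
    simp only [Set.mem_setOf_eq, Set.mem_singleton_iff]
    constructor
    · rintro ⟨s, hs, rfl⟩
      rw [Finset.card_eq_iff_eq_univ] at hs
      rw [hs]
    · rintro rfl; exact ⟨univ, by simp, rfl⟩
  rw [eSum, this, csSup_singleton]

lemma eSum_le_total {x : ι → ℝ} (hx : ∀ i, 0 ≤ x i) (l : ℕ) : eSum x l ≤ ∑ i, x i := by
  apply Real.sSup_le
  · rintro r ⟨s, hs, rfl⟩
    exact Finset.sum_le_sum_of_subset_of_nonneg (subset_univ s) fun i _ _ => hx i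
  · exact Finset.sum_nonneg fun i _ => hx i

lemma eSum_nonneg {x : ι → ℝ} (hx : ∀ i, 0 ≤ x i) {l : ℕ} (hl : l ≤ Fintype.card ι) :
    0 ≤ eSum x l := by
  obtain ⟨t, -, ht⟩ := Finset.exists_subset_card_eq
    (show l ≤ (univ : Finset ι).card by simpa using hl)
  exact le_trans (Finset.sum_nonneg fun i _ => hx i) (sum_le_eSum x ht)

lemma eSum_comp_equiv (e : κ ≃ ι) (x : ι → ℝ) (l : ℕ) : eSum (x ∘ e) l = eSum x l := by
  classical
  unfold eSum
  congr 1
  ext r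
  constructor
  · rintro ⟨s, hs, rfl⟩
    refine ⟨s.image e, by rw [Finset.card_image_of_injective _ e.injective, hs], ?_⟩
    rw [Finset.sum_image (by intro a _ b _ hab; exact e.injective hab)]
    rfl
  · rintro ⟨s, hs, rfl⟩
    refine ⟨s.image e.symm, by rw [Finset.card_image_of_injective _ e.symm.injective, hs], ?_⟩
    rw [Finset.sum_image (by intro a _ b _ hab; exact e.symm.injective hab)]
    simp

end aux


lemma strictMono_fin_le {t N : ℕ} (φ : Fin t → Fin N) (hφ : StrictMono φ) :
    ∀ k (hk : k < t), k ≤ (φ ⟨k, hk⟩ : ℕ) := by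
  intro k
  induction k with
  | zero => intro hk; exact Nat.zero_le _
  | succ k ih =>
    intro hk
    have hk' : k < t := Nat.lt_of_succ_lt hk
    have h1 := ih hk'
    have h2 : φ ⟨k, hk'⟩ < φ ⟨k + 1, hk⟩ := hφ (by simp [Fin.mk_lt_mk])
    have := Fin.lt_iff_val_lt_val.mp h2
    omega

lemma sum_subset_le_prefix (b : ℕ → ℝ) (N : ℕ)
    (hb : ∀ s t : ℕ, s ≤ t → t < N → b t ≤ b s)
    (T : Finset ℕ) (hT : T ⊆ Finset.range N) :
    ∑ j ∈ T, b j ≤ ∑ j ∈ Finset.range T.card, b j := by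
  set t := T.card with htdef
  set φ := T.orderEmbOfFin htdef.symm
  have hmem : ∀ i : Fin t, (φ i : ℕ) ∈ T := fun i => T.orderEmbOfFin_mem htdef.symm i
  have hsum : ∑ j ∈ T, b j = ∑ i : Fin t, b (φ i) := by
    refine (Finset.sum_bij (fun (i : Fin t) _ => (φ i : ℕ)) (fun i _ => hmem i) ?_ ?_ ?_).symm
    · intro a _ b _ hab
      exact φ.injective hab
    · intro a ha
      have : a ∈ Set.range φ := by rw [Finset.range_orderEmbOfFin]; exact ha
      obtain ⟨i, hi⟩ := this
      exact ⟨i, mem_univ i, hi⟩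
    · intro a _; rfl
  rw [hsum, ← Fin.sum_univ_eq_sum_range]
  apply Finset.sum_le_sum
  intro i _
  have h1 : (i : ℕ) ≤ (φ i : ℕ) := by
    set ψ : Fin t → Fin N := fun j => (⟨φ j, Finset.mem_range.mp (hT (hmem j))⟩ : Fin N) with hψdef
    have hψ : StrictMono ψ := fun a b hab => Fin.mk_lt_mk.mpr (φ.strictMono hab)
    have := strictMono_fin_le ψ hψ i i.2
    simpa [hψdef] using this
  exact hb i (φ i) h1 (Finset.mem_range.mp (hT (hmem i)))

lemma sum_range_enum {M : Type*} [AddCommMonoid M] [Fintype ι] (g : ℕ → ι)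
    (hinj : ∀ a, a < Fintype.card ι → ∀ b, b < Fintype.card ι → g a = g b → a = b)
    (hsurj : ∀ i, ∃ j, j < Fintype.card ι ∧ g j = i) (u : ι → M) :
    ∑ j ∈ Finset.range (Fintype.card ι), u (g j) = ∑ i, u i := by
  refine Finset.sum_bij (fun (a : ℕ) _ => g a) (fun a _ => mem_univ _) ?_ ?_ ?_
  · intro a ha b hb hab
    exact hinj a (mem_range.mp ha) b (mem_range.mp hb) hab
  · intro i _
    obtain ⟨j, hj, hji⟩ := hsurj i
    exact ⟨j, mem_range.mpr hj, hji⟩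
  · intro a _; rfl

lemma prefix_le_eSum [Fintype ι] (x : ι → ℝ) (g : ℕ → ι)
    (hinj : ∀ a, a < Fintype.card ι → ∀ b, b < Fintype.card ι → g a = g b → a = b)
    {t : ℕ} (ht : t ≤ Fintype.card ι) :
    ∑ j ∈ Finset.range t, x (g j) ≤ eSum x t := by
  classical
  have hinj0 : ∀ a ∈ Finset.range t, ∀ b ∈ Finset.range t, g a = g b → a = b := fun a ha b hb =>
    hinj a (lt_of_lt_of_le (mem_range.mp ha) ht) b (lt_of_lt_of_le (mem_range.mp hb) ht)
  have hcard : ((Finset.range t).image g).card = t := by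
    rw [Finset.card_image_of_injOn fun a ha b hb => hinj0 a (Finset.mem_coe.mp ha) b (Finset.mem_coe.mp hb),
      Finset.card_range]
  have hsum : ∑ i ∈ (Finset.range t).image g, x i = ∑ j ∈ Finset.range t, x (g j) :=
    Finset.sum_image hinj0
  rw [← hsum]; exact sum_le_eSum x hcard

lemma exists_sorted_enum [Fintype ι] (w : ι → ℝ) (hN : 0 < Fintype.card ι) :
    ∃ g : ℕ → ι,
      (∀ a, a < Fintype.card ι → ∀ b, b < Fintype.card ι → g a = g b → a = b) ∧
      (∀ i : ι, ∃ j, j < Fintype.card ι ∧ g j = i) ∧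
      (∀ s t : ℕ, s ≤ t → t < Fintype.card ι → w (g t) ≤ w (g s)) ∧
      (∀ t : ℕ, t ≤ Fintype.card ι → eSum w t = ∑ j ∈ Finset.range t, w (g j)) := by
  classical
  set N := Fintype.card ι with hNdef
  set e : Fin N ≃ ι := (Fintype.equivFin ι).symm with hedef
  have hmono := Tuple.monotone_sort (fun j : Fin N => -w (e j))
  set σ := Tuple.sort (fun j : Fin N => -w (e j)) with hσdef
  set g : ℕ → ι := fun t => e (σ ⟨t % N, Nat.mod_lt t hN⟩) with hgdef
  have hgmod : ∀ t (ht : t < N), g t = e (σ ⟨t, ht⟩) := by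
    intro t ht
    have : (⟨t % N, Nat.mod_lt t hN⟩ : Fin N) = ⟨t, ht⟩ := by
      ext; simp [Nat.mod_eq_of_lt ht]
    simp only [hgdef, this]
  have hinj : ∀ a, a < N → ∀ b, b < N → g a = g b → a = b := by
    intro a ha b hb hab
    rw [hgmod a ha, hgmod b hb] at hab
    have := σ.injective (e.injective hab)
    simpa using this
  have hsurj : ∀ i : ι, ∃ j, j < N ∧ g j = i := by
    intro i
    refine ⟨(σ.symm (e.symm i) : Fin N).val, (σ.symm (e.symm i)).isLt, ?_⟩
    rw [hgmod _ (σ.symm (e.symm i)).isLt]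
    simp
  have hsort : ∀ s t : ℕ, s ≤ t → t < N → w (g t) ≤ w (g s) := by
    intro s t hst ht
    have hs : s < N := lt_of_le_of_lt hst ht
    rw [hgmod s hs, hgmod t ht]
    have := hmono (show (⟨s, hs⟩ : Fin N) ≤ ⟨t, ht⟩ from Fin.mk_le_mk.mpr hst)
    simpa using this
  refine ⟨g, hinj, hsurj, hsort, ?_⟩
  intro t ht
  apply le_antisymm
  · obtain ⟨S, hScard, hSeq⟩ := exists_eSum_eq w ht
    rw [hSeq]
    set T := (Finset.range N).filter (fun j => g j ∈ S) with hTdef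
    have hTsub : T ⊆ Finset.range N := Finset.filter_subset _ _
    have hTim : T.image g = S := by
      ext i
      simp only [hTdef, Finset.mem_image, Finset.mem_filter, Finset.mem_range]
      constructor
      · rintro ⟨j, ⟨hj, hjS⟩, rfl⟩; exact hjS
      · intro hi; obtain ⟨j, hj, rfl⟩ := hsurj i; exact ⟨j, ⟨hj, hi⟩, rfl⟩
    have hTinj : ∀ a ∈ T, ∀ b ∈ T, g a = g b → a = b := fun a ha b hb =>
      hinj a (mem_range.mp (hTsub ha)) b (mem_range.mp (hTsub hb))
    have hTcard : T.card = t := by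
      rw [← hScard, ← hTim,
        Finset.card_image_of_injOn fun a ha b hb => hTinj a (Finset.mem_coe.mp ha) b (Finset.mem_coe.mp hb)]
    have h1 : ∑ i ∈ S, w i = ∑ j ∈ T, w (g j) := by rw [← hTim, Finset.sum_image hTinj]
    rw [h1, ← hTcard]
    exact sum_subset_le_prefix (fun j => w (g j)) N hsort T hTsub
  · exact prefix_le_eSum w g hinj ht

lemma abel_sum (N : ℕ) (u b : ℕ → ℝ) (hbN : b N = 0) :
    ∑ t ∈ Finset.range N, u t * b t
      = ∑ s ∈ Finset.range N, (b s - b (s + 1)) * ∑ t ∈ Finset.range (s + 1), u t := by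
  have hb : ∀ t, t < N → b t = ∑ s ∈ Finset.Ico t N, (b s - b (s + 1)) := by
    intro t ht
    rw [Finset.sum_Ico_eq_sum_range]
    have h := Finset.sum_range_sub' (fun k => b (t + k)) (N - t)
    simp only [← Nat.add_assoc, Nat.add_zero] at h
    rw [show t + (N - t) = N by omega] at h
    rw [h, hbN, sub_zero]
  calc ∑ t ∈ Finset.range N, u t * b t
      = ∑ t ∈ Finset.range N, ∑ s ∈ Finset.Ico t N, u t * (b s - b (s + 1)) := by
        refine Finset.sum_congr rfl fun t htm => ?_
        rw [← Finset.mul_sum, ← hb t (mem_range.mp htm)]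
    _ = ∑ s ∈ Finset.range N, ∑ t ∈ Finset.range (s + 1), u t * (b s - b (s + 1)) := by
        refine Finset.sum_comm' fun a c => ?_
        simp only [Finset.mem_range, Finset.mem_Ico]
        omega
    _ = ∑ s ∈ Finset.range N, (b s - b (s + 1)) * ∑ t ∈ Finset.range (s + 1), u t := by
        refine Finset.sum_congr rfl fun s _ => ?_
        rw [Finset.mul_sum]
        exact Finset.sum_congr rfl fun t _ => by ring

lemma majsum [Fintype ι] {x y : ι → ℝ} (hx0 : ∀ i, 0 ≤ x i) (hy0 : ∀ i, 0 ≤ y i)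
    (hN : 0 < Fintype.card ι)
    (hmaj : ∀ t : ℕ, 1 ≤ t → t < Fintype.card ι → eSum x t ≤ eSum y t)
    (hsum : ∑ i, x i = ∑ i, y i)
    (a : ι → ℝ) (ha : ∀ i, 0 ≤ a i) :
    ∃ ρ : ι → ι, Function.Bijective ρ ∧ ∑ i, x i * a i ≤ ∑ i, y i * a (ρ i) := by
  classical
  set N := Fintype.card ι with hNdef
  obtain ⟨g, hginj, hgsurj, hgsort, -⟩ := exists_sorted_enum a hN
  obtain ⟨h, hhinj, hhsurj, -, hhpre⟩ := exists_sorted_enum y hN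
  -- inverse of h
  have hhinv : ∀ i : ι, ∃ j, j < N ∧ h j = i := hhsurj
  set hinv : ι → ℕ := fun i => Classical.choose (hhinv i) with hinvdef
  have hinvspec : ∀ i, hinv i < N ∧ h (hinv i) = i := fun i => Classical.choose_spec (hhinv i)
  set ρ : ι → ι := fun i => g (hinv i) with hρdef
  have hρh : ∀ j, j < N → ρ (h j) = g j := by
    intro j hj
    have h1 := (hinvspec (h j)).2
    have h2 := (hinvspec (h j)).1
    have : hinv (h j) = j := hhinj _ h2 _ hj h1
    simp only [hρdef, this]
  have hρbij : Function.Bijective ρ := by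
    constructor
    · intro i1 i2 h12
      have e1 := hginj _ (hinvspec i1).1 _ (hinvspec i2).1 h12
      calc i1 = h (hinv i1) := ((hinvspec i1).2).symm
        _ = h (hinv i2) := by rw [e1]
        _ = i2 := (hinvspec i2).2
    · intro i'
      obtain ⟨j, hj, rfl⟩ := hgsurj i'
      exact ⟨h j, hρh j hj⟩
  refine ⟨ρ, hρbij, ?_⟩
  set b : ℕ → ℝ := fun j => if hj : j < N then a (g j) else 0 with hbdef
  have hbN : b N = 0 := by simp [hbdef]
  have hd : ∀ s, s < N → 0 ≤ b s - b (s + 1) := by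
    intro s hs
    by_cases hs1 : s + 1 < N
    · simp only [hbdef, dif_pos hs, dif_pos hs1]
      have := hgsort s (s + 1) (Nat.le_succ s) hs1
      linarith
    · simp only [hbdef, dif_pos hs, dif_neg hs1]
      simpa using ha (g s)
  have hL : ∑ i, x i * a i = ∑ j ∈ Finset.range N, (fun t => x (g t)) j * b j := by
    rw [← sum_range_enum g hginj hgsurj (fun i => x i * a i)]
    refine Finset.sum_congr rfl fun j hj => ?_
    simp only [hbdef, dif_pos (Finset.mem_range.mp hj)]
  have hR : ∑ i, y i * a (ρ i) = ∑ j ∈ Finset.range N, (fun t => y (h t)) j * b j := by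
    rw [← sum_range_enum h hhinj hhsurj (fun i => y i * a (ρ i))]
    refine Finset.sum_congr rfl fun j hj => ?_
    have hjN := Finset.mem_range.mp hj
    simp only [hbdef, dif_pos hjN, hρh j hjN]
  rw [hL, hR, abel_sum N _ b hbN, abel_sum N _ b hbN]
  apply Finset.sum_le_sum
  intro s hs
  have hsN := Finset.mem_range.mp hs
  apply mul_le_mul_of_nonneg_left _ (hd s hsN)
  -- ∑ t ∈ range (s+1), x (g t) ≤ ∑ t ∈ range (s+1), y (h t)
  have h1 : ∑ t ∈ Finset.range (s + 1), x (g t) ≤ eSum x (s + 1) :=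
    prefix_le_eSum x g hginj (by omega)
  have h2 : eSum x (s + 1) ≤ eSum y (s + 1) := by
    rcases Nat.lt_or_ge (s + 1) N with hlt | hge
    · exact hmaj (s + 1) (by omega) hlt
    · have : s + 1 = N := by omega
      rw [this, hNdef, eSum_card, eSum_card, hsum]
  have h3 : eSum y (s + 1) = ∑ t ∈ Finset.range (s + 1), y (h t) := hhpre (s + 1) (by omega)
  linarith

lemma card_pos_of_prob [Fintype ι] {x : ι → ℝ} (hx : IsProbVec x) : 0 < Fintype.card ι := by
  by_contra hc
  have h0 : IsEmpty ι := by
    rw [← Fintype.card_eq_zero_iff]; omega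
  have := hx.2
  rw [Finset.univ_eq_empty, Finset.sum_empty] at this
  exact one_ne_zero this.symm

lemma int_eSum_le [Fintype κ] {x' y' : κ → ℝ} (h' : InteriorS x' y') {t : ℕ}
    (ht : t ≤ Fintype.card κ) : eSum x' t ≤ eSum y' t := by
  rcases Nat.eq_zero_or_pos t with rfl | ht1
  · rw [eSum_zero, eSum_zero]
  rcases Nat.lt_or_ge t (Fintype.card κ) with hlt | hge
  · exact le_of_lt (h'.1 t ht1 hlt)
  · have : t = Fintype.card κ := by omega
    rw [this, eSum_card, eSum_card, h'.2]

lemma pos_of_interior [Fintype ι] {x y : ι → ℝ} (hx : IsProbVec x) (hy : IsProbVec y)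
    (h : InteriorS x y) : ∀ i, 0 < x i := by
  classical
  intro i
  rcases lt_or_eq_of_le (hx.1 i) with hpos | heq
  · exact hpos
  exfalso
  rcases Nat.lt_or_ge (Fintype.card ι) 2 with hc1 | hc2
  · -- card = 1
    have hone : ∀ a b : ι, a = b := Fintype.card_le_one_iff.mp (by omega)
    have : ∑ j, x j = x i := by
      refine Finset.sum_eq_single_of_mem i (Finset.mem_univ i) fun b _ hb => absurd (hone b i) hb
    rw [hx.2] at this
    rw [← heq] at this
    exact one_ne_zero this
  · set N := Fintype.card ι with hNdef
    have hmem : i ∈ (Finset.univ : Finset ι) := Finset.mem_univ i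
    have hsum1 : ∑ j ∈ Finset.univ.erase i, x j = 1 := by
      rw [Finset.sum_erase_eq_sub hmem, hx.2, ← heq, sub_zero]
    have hcard : (Finset.univ.erase i).card = N - 1 := by
      rw [Finset.card_erase_of_mem hmem, Finset.card_univ]
    have h1 : (1 : ℝ) ≤ eSum x (N - 1) := by
      rw [← hsum1]; exact sum_le_eSum x hcard
    have h2 : eSum x (N - 1) < eSum y (N - 1) := h.1 (N - 1) (by omega) (by omega)
    have h3 : eSum y (N - 1) ≤ ∑ j, y j := eSum_le_total hy.1 _
    rw [hy.2] at h3
    linarith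

lemma constr [Fintype ι] [Fintype κ] (y : ι → ℝ) (y' : κ → ℝ) (c : ι → ℕ)
    (hc : ∀ i, c i ≤ Fintype.card κ) :
    ∑ i, y i * eSum y' (c i) ≤ eSum (kron y y') (∑ i, c i) := by
  classical
  choose T hT1 hT2 using fun i => exists_eSum_eq y' (hc i)
  set S : Finset (ι × κ) := Finset.univ.biUnion (fun i => (T i).image (Prod.mk i)) with hSdef
  have hdisj : ((Finset.univ : Finset ι) : Set ι).PairwiseDisjoint
      (fun i => (T i).image (Prod.mk i)) := by
    intro i _ j _ hij
    simp only [Finset.disjoint_left]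
    rintro p hp hq
    obtain ⟨a, -, rfl⟩ := Finset.mem_image.mp hp
    obtain ⟨b, -, hb⟩ := Finset.mem_image.mp hq
    exact hij (by simpa using congrArg Prod.fst hb.symm)
  have hcard : S.card = ∑ i, c i := by
    rw [hSdef, Finset.card_biUnion hdisj]
    refine Finset.sum_congr rfl fun i _ => ?_
    rw [Finset.card_image_of_injective _ (fun a b hab => by simpa using congrArg Prod.snd hab),
      hT1 i]
  have hsum : ∑ p ∈ S, kron y y' p = ∑ i, y i * eSum y' (c i) := by
    rw [hSdef, Finset.sum_biUnion hdisj]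
    refine Finset.sum_congr rfl fun i _ => ?_
    rw [Finset.sum_image (fun a _ b _ hab => by simpa using congrArg Prod.snd hab)]
    rw [hT2 i, Finset.mul_sum]
    rfl
  rw [← hsum]
  exact sum_le_eSum _ hcard

lemma kron_prob [Fintype ι] [Fintype κ] {x : ι → ℝ} {x' : κ → ℝ}
    (hx : IsProbVec x) (hx' : IsProbVec x') : IsProbVec (kron x x') := by
  constructor
  · intro p; exact mul_nonneg (hx.1 p.1) (hx'.1 p.2)
  · rw [Fintype.sum_prod_type]
    calc ∑ i, ∑ j, kron x x' (i, j) = ∑ i, x i * ∑ j, x' j := by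
          refine Finset.sum_congr rfl fun i _ => ?_
          simp only [kron]
          rw [Finset.mul_sum]
      _ = 1 := by rw [hx'.2]; simpa using hx.2

lemma kron_interior [Fintype ι] [Fintype κ] {x y : ι → ℝ} {x' y' : κ → ℝ}
    (hx : IsProbVec x) (hy : IsProbVec y) (hx' : IsProbVec x') (hy' : IsProbVec y')
    (h : InteriorS x y) (h' : InteriorS x' y') : InteriorS (kron x x') (kron y y') := by
  classical
  have hN : 0 < Fintype.card ι := card_pos_of_prob hx
  have hN' : 0 < Fintype.card κ := card_pos_of_prob hx'
  have hxpos := pos_of_interior hx hy h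
  refine ⟨?_, by rw [(kron_prob hx hx').2, (kron_prob hy hy').2]⟩
  intro l hl1 hl2
  rw [Fintype.card_prod] at hl2
  obtain ⟨S, hScard, hSeq⟩ := exists_eSum_eq (kron x x')
    (le_of_lt (show l < Fintype.card (ι × κ) by rw [Fintype.card_prod]; exact hl2))
  set c : ι → ℕ := fun i => (S.filter (fun p => p.1 = i)).card with hcdef
  have hcsum : ∑ i, c i = l := by
    rw [← hScard]
    exact (Finset.card_eq_sum_card_fiberwise (f := Prod.fst) (fun p _ => Finset.mem_univ p.1)).symm
  have hcle : ∀ i, c i ≤ Fintype.card κ := by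
    intro i
    have hinj : Set.InjOn Prod.snd ((S.filter (fun p => p.1 = i) : Finset (ι × κ)) : Set (ι × κ)) := by
      intro p hp q hq hpq
      have hp1 : p.1 = i := (Finset.mem_filter.mp (Finset.mem_coe.mp hp)).2
      have hq1 : q.1 = i := (Finset.mem_filter.mp (Finset.mem_coe.mp hq)).2
      exact Prod.ext (hp1.trans hq1.symm) hpq
    have := Finset.card_le_card_of_injOn (f := Prod.snd) (fun p _ => Finset.mem_univ p.2) hinj
    simpa [hcdef] using this
  -- Step A
  have hA : eSum (kron x x') l ≤ ∑ i, x i * eSum x' (c i) := by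
    rw [hSeq,
      ← Finset.sum_fiberwise_of_maps_to (g := Prod.fst) (fun p _ => Finset.mem_univ p.1) (kron x x')]
    apply Finset.sum_le_sum
    intro i _
    have hfib : ∑ p ∈ S.filter (fun p => p.1 = i), kron x x' p
        = x i * ∑ p ∈ S.filter (fun p => p.1 = i), x' p.2 := by
      rw [Finset.mul_sum]
      refine Finset.sum_congr rfl fun p hp => ?_
      have hp1 : p.1 = i := (Finset.mem_filter.mp hp).2
      simp [kron, hp1]
    rw [hfib]
    refine mul_le_mul_of_nonneg_left ?_ (hx.1 i)
    have hinj : ∀ a ∈ S.filter (fun p => p.1 = i), ∀ b ∈ S.filter (fun p => p.1 = i),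
        a.2 = b.2 → a = b := by
      intro a ha b hb hab
      have ha1 : a.1 = i := (Finset.mem_filter.mp ha).2
      have hb1 : b.1 = i := (Finset.mem_filter.mp hb).2
      exact Prod.ext (ha1.trans hb1.symm) hab
    have himg : ∑ j ∈ (S.filter (fun p => p.1 = i)).image Prod.snd, x' j
        = ∑ p ∈ S.filter (fun p => p.1 = i), x' p.2 := Finset.sum_image hinj
    have hcardi : ((S.filter (fun p => p.1 = i)).image Prod.snd).card = c i := by
      rw [Finset.card_image_of_injOn fun a ha b hb hab =>
        hinj a (Finset.mem_coe.mp ha) b (Finset.mem_coe.mp hb) hab]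
    rw [← himg]
    exact sum_le_eSum x' hcardi
  -- Step B
  have hB : ∑ i, x i * eSum x' (c i) < eSum (kron y y') l := by
    by_cases hmid : ∃ i, 0 < c i ∧ c i < Fintype.card κ
    · obtain ⟨i0, hi01, hi02⟩ := hmid
      have hstrict : ∑ i, x i * eSum x' (c i) < ∑ i, x i * eSum y' (c i) := by
        refine Finset.sum_lt_sum (fun i _ => ?_) ⟨i0, Finset.mem_univ i0, ?_⟩
        · exact mul_le_mul_of_nonneg_left (int_eSum_le h' (hcle i)) (hx.1 i)
        · exact mul_lt_mul_of_pos_left (h'.1 (c i0) hi01 hi02) (hxpos i0)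
      obtain ⟨ρ, hρbij, hQ⟩ := majsum hx.1 hy.1 hN
        (fun t ht1 ht2 => le_of_lt (h.1 t ht1 ht2)) (hx.2.trans hy.2.symm)
        (fun i => eSum y' (c i)) (fun i => eSum_nonneg hy'.1 (hcle i))
      have hC := constr y y' (fun i => c (ρ i)) (fun i => hcle _)
      have hcomp : ∑ i, c (ρ i) = l := by
        rw [Function.Bijective.sum_comp hρbij c]; exact hcsum
      rw [hcomp] at hC
      calc ∑ i, x i * eSum x' (c i) < ∑ i, x i * eSum y' (c i) := hstrict
        _ ≤ ∑ i, y i * eSum y' (c (ρ i)) := hQ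
        _ ≤ eSum (kron y y') l := hC
    · push_neg at hmid
      have hall : ∀ i, c i = 0 ∨ c i = Fintype.card κ := by
        intro i
        rcases Nat.eq_zero_or_pos (c i) with h0 | hpos
        · exact Or.inl h0
        · exact Or.inr (le_antisymm (hcle i) (hmid i hpos))
      set R := Finset.univ.filter (fun i => c i = Fintype.card κ) with hRdef
      have hrl : R.card * Fintype.card κ = l := by
        rw [← hcsum, ← Finset.sum_filter_add_sum_filter_not Finset.univ
          (fun i => c i = Fintype.card κ) c]
        have e1 : ∑ i ∈ R, c i = R.card * Fintype.card κ := by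
          rw [Finset.sum_congr rfl (fun i hi => (Finset.mem_filter.mp hi).2),
            Finset.sum_const, smul_eq_mul]
        have e2 : ∑ i ∈ Finset.univ.filter (fun i => ¬c i = Fintype.card κ), c i = 0 := by
          refine Finset.sum_eq_zero fun i hi => ?_
          rcases hall i with h0 | hN'eq
          · exact h0
          · exact absurd hN'eq (Finset.mem_filter.mp hi).2
        rw [← hRdef, e1, e2, add_zero]
      have hr1 : 1 ≤ R.card := by
        rcases Nat.eq_zero_or_pos R.card with h0 | hpos
        · rw [h0, zero_mul] at hrl; omega
        · exact hpos
      have hrN : R.card < Fintype.card ι := by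
        by_contra hge
        have : Fintype.card ι * Fintype.card κ ≤ R.card * Fintype.card κ :=
          Nat.mul_le_mul_right _ (by omega)
        omega
      have hxsum : ∑ i, x i * eSum x' (c i) = ∑ i ∈ R, x i := by
        rw [← Finset.sum_filter_add_sum_filter_not Finset.univ
          (fun i => c i = Fintype.card κ) (fun i => x i * eSum x' (c i)), ← hRdef]
        have e1 : ∑ i ∈ R, x i * eSum x' (c i) = ∑ i ∈ R, x i := by
          refine Finset.sum_congr rfl fun i hi => ?_
          rw [(Finset.mem_filter.mp hi).2, eSum_card, hx'.2, mul_one]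
        have e2 : ∑ i ∈ Finset.univ.filter (fun i => ¬c i = Fintype.card κ),
            x i * eSum x' (c i) = 0 := by
          refine Finset.sum_eq_zero fun i hi => ?_
          rcases hall i with h0 | hN'eq
          · rw [h0, eSum_zero, mul_zero]
          · exact absurd hN'eq (Finset.mem_filter.mp hi).2
        rw [e1, e2, add_zero]
      have h1 : ∑ i ∈ R, x i ≤ eSum x R.card := sum_le_eSum x rfl
      have h2 : eSum x R.card < eSum y R.card := h.1 R.card hr1 hrN
      have h3 : eSum y R.card ≤ eSum (kron y y') l := by
        obtain ⟨A, hA1, hA2⟩ := exists_eSum_eq y (le_of_lt hrN)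
        have hC := constr y y' (fun i => if i ∈ A then Fintype.card κ else 0)
          (fun i => by by_cases hiA : i ∈ A <;> simp [hiA])
        have e3 : ∑ i, (if i ∈ A then Fintype.card κ else 0) = l := by
          rw [Finset.sum_ite_mem, Finset.univ_inter, Finset.sum_const, smul_eq_mul, hA1, hrl]
        have e4 : ∑ i, y i * eSum y' (if i ∈ A then Fintype.card κ else 0) = eSum y R.card := by
          rw [← Finset.sum_filter_add_sum_filter_not Finset.univ (fun i => i ∈ A)
            (fun i => y i * eSum y' (if i ∈ A then Fintype.card κ else 0))]
          have huniv : Finset.univ.filter (fun i => i ∈ A) = A := by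
            ext i; simp
          have f1 : ∑ i ∈ Finset.univ.filter (fun i => i ∈ A),
              y i * eSum y' (if i ∈ A then Fintype.card κ else 0) = ∑ i ∈ A, y i := by
            rw [huniv]
            refine Finset.sum_congr rfl fun i hi => ?_
            rw [if_pos hi, eSum_card, hy'.2, mul_one]
          have f2 : ∑ i ∈ Finset.univ.filter (fun i => ¬ i ∈ A),
              y i * eSum y' (if i ∈ A then Fintype.card κ else 0) = 0 := by
            refine Finset.sum_eq_zero fun i hi => ?_
            rw [if_neg (Finset.mem_filter.mp hi).2, eSum_zero, mul_zero]
          rw [f1, f2, add_zero, ← hA2]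
        rw [e3, e4] at hC
        exact hC
      calc ∑ i, x i * eSum x' (c i) = ∑ i ∈ R, x i := hxsum
        _ ≤ eSum x R.card := h1
        _ < eSum y R.card := h2
        _ ≤ eSum (kron y y') l := h3
  exact lt_of_le_of_lt hA hB

lemma isProbVec_comp [Fintype ι] [Fintype κ] (e : κ ≃ ι) {x : ι → ℝ} (hx : IsProbVec x) :
    IsProbVec (x ∘ e) :=
  ⟨fun i => hx.1 (e i), by simp only [Function.comp_apply]; rw [Equiv.sum_comp e x]; exact hx.2⟩

lemma interiorS_comp [Fintype ι] [Fintype κ] (e : κ ≃ ι) {x y : ι → ℝ} (h : InteriorS x y) :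
    InteriorS (x ∘ e) (y ∘ e) := by
  constructor
  · intro l hl1 hl2
    rw [eSum_comp_equiv e x, eSum_comp_equiv e y]
    rw [Fintype.card_congr e] at hl2
    exact h.1 l hl1 hl2
  · simp only [Function.comp_apply]; rw [Equiv.sum_comp e x, Equiv.sum_comp e y]; exact h.2

def succSplit (ι : Type*) (k : ℕ) : (Fin (k + 1) → ι) ≃ ι × (Fin k → ι) where
  toFun g := (g 0, fun i => g i.succ)
  invFun p := Fin.cons p.1 p.2
  left_inv g := by
    funext j
    refine Fin.cases ?_ (fun i => ?_) j
    · simp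
    · simp
  right_inv p := by
    refine Prod.ext ?_ ?_
    · simp
    · funext i; simp

lemma kpow_succ_eq (x : ι → ℝ) (k : ℕ) :
    kpow x (k + 1) = (kron x (kpow x k)) ∘ (succSplit ι k).symm.symm := by
  funext g
  simp only [kpow, kron, succSplit, Function.comp_apply, Equiv.symm_symm, Equiv.coe_fn_mk]
  rw [Fin.prod_univ_succ]

lemma kpow_interior [Fintype ι] [DecidableEq ι] {x y : ι → ℝ}
    (hx : IsProbVec x) (hy : IsProbVec y) (h : InteriorS x y) (k : ℕ) :
    IsProbVec (kpow x k) ∧ IsProbVec (kpow y k) ∧ InteriorS (kpow x k) (kpow y k) := by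
  induction k with
  | zero =>
    have hcard : Fintype.card (Fin 0 → ι) = 1 :=
      Fintype.card_eq_one_iff.mpr ⟨fun i => i.elim0, fun g => funext fun i => i.elim0⟩
    have hone : ∀ (z : ι → ℝ), ∑ f : Fin 0 → ι, kpow z 0 f = 1 := by
      intro z
      have : ∀ f : Fin 0 → ι, kpow z 0 f = 1 := fun f => by simp [kpow]
      rw [Finset.sum_congr rfl fun f _ => this f, Finset.sum_const, Finset.card_univ, hcard]
      simp
    refine ⟨⟨fun f => by simp [kpow], hone x⟩, ⟨fun f => by simp [kpow], hone y⟩, ?_, ?_⟩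
    · intro l hl1 hl2
      rw [hcard] at hl2
      omega
    · rw [hone x, hone y]
  | succ k ih =>
    rw [kpow_succ_eq x k, kpow_succ_eq y k]
    exact ⟨isProbVec_comp _ (kron_prob hx ih.1), isProbVec_comp _ (kron_prob hy ih.2.1),
      interiorS_comp _ (kron_interior hx hy ih.1 ih.2.1 h ih.2.2)⟩

/-- If `x ∈ S°(y)` and `x' ∈ S°(y')`, then for all positive `k, p, q`:
`x^{⊗k} ∈ S°(y^{⊗k})` and `x^{⊗p} ⊗ x'^{⊗q} ∈ S°(y^{⊗p} ⊗ y'^{⊗q})`. -/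
theorem stmt8 {m n : ℕ} (x y : Fin m → ℝ) (x' y' : Fin n → ℝ)
    (hx : IsProbVec x) (hy : IsProbVec y) (hx' : IsProbVec x') (hy' : IsProbVec y')
    (h : InteriorS x y) (h' : InteriorS x' y')
    (k p q : ℕ) (hk : 0 < k) (hp : 0 < p) (hq : 0 < q) :
    InteriorS (kpow x k) (kpow y k) ∧
      InteriorS (kron (kpow x p) (kpow x' q)) (kron (kpow y p) (kpow y' q)) := by
  obtain ⟨hxk, hyk, hik⟩ := kpow_interior hx hy h k
  obtain ⟨hxp, hyp, hip⟩ := kpow_interior hx hy h p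
  obtain ⟨hxq, hyq, hiq⟩ := kpow_interior hx' hy' h' q
  exact ⟨hik, kron_interior hxp hyp hxq hyq hip hiq⟩
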